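/- Let G be a simple graph on a finite vertex set and let NM(G) = A·L be its neighbourhood matrix. Consider the set S of ordered quadruples (a,b,c,d) of vertices with a adjacent to b, b adjacent to c, c adjacent to d, d adjacent to a, a ≠ c and b ≠ d (so each quadruple traces a 4-cycle, induced or not, each 4-cycle arising from exactly 8 quadruples). Then |S| = 2·∑_i ( ∑_{j ∈ N(i)} C(|NM(G)[j,j]| − NM(G)[i,j], 2) + ∑_{j ∉ N(i), j ≠ i} C(|NM(G)[i,j]|, 2) ), where C(m,2) denotes the binomial coefficient m choose 2, the quantity |NM(G)[j,j]| − NM(G)[i,j] is interpreted as a natural number, and |NM(G)[i,j]| denotes the absolute value of the entry. -/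

import Mathlib

open SimpleGraph Matrix Finset

private lemma nm_entry {V : Type*} [Fintype V] [DecidableEq V] (G : SimpleGraph V)
    [DecidableRel G.Adj] (i j : V) :
    (G.adjMatrix ℤ * G.lapMatrix ℤ) i j =
      (if G.Adj i j then (G.degree j : ℤ) else 0)
        - ((G.neighborFinset i ∩ G.neighborFinset j).card : ℤ) := by
  rw [lapMatrix, Matrix.mul_sub, Matrix.sub_apply, degMatrix, Matrix.mul_diagonal]
  congr 1
  · simp [adjMatrix]
  · rw [adjMatrix_mul_apply]
    rw [Finset.card_eq_sum_ones, Nat.cast_sum, ← Finset.sum_filter_add_sum_filter_not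
      (G.neighborFinset i) (· ∈ G.neighborFinset j)]
    have h1 : G.neighborFinset i ∩ G.neighborFinset j
        = (G.neighborFinset i).filter (· ∈ G.neighborFinset j) := by
      ext x; simp [and_comm]
    rw [h1]
    have h2 : ∀ u ∈ (G.neighborFinset i).filter (· ∈ G.neighborFinset j),
        G.adjMatrix ℤ u j = 1 := by
      intro u hu; simp only [mem_filter, mem_neighborFinset] at hu
      simp [adjMatrix, G.adj_comm, hu.2]
    have h3 : ∀ u ∈ (G.neighborFinset i).filter (¬ · ∈ G.neighborFinset j),
        G.adjMatrix ℤ u j = 0 := by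
      intro u hu; simp only [mem_filter, mem_neighborFinset] at hu
      simp [adjMatrix, G.adj_comm, hu.2]
    rw [Finset.sum_congr rfl h2, Finset.sum_congr rfl h3]
    simp

private lemma two_mul_choose_two (n : ℕ) : 2 * n.choose 2 = n * n - n := by
  have h : 2 ∣ n * (n - 1) := by
    cases n with
    | zero => simp
    | succ m =>
      simpa [Nat.succ_sub_one, Nat.mul_comm] using (Nat.even_mul_succ_self m).two_dvd
  rw [Nat.choose_two_right, Nat.mul_div_cancel' h, Nat.mul_sub_one]

theorem four_cycle_count_nm {V : Type*} [Fintype V] [DecidableEq V]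
    (G : SimpleGraph V) [DecidableRel G.Adj] :
    ((Finset.univ.filter (fun q : V × V × V × V =>
        G.Adj q.1 q.2.1 ∧ G.Adj q.2.1 q.2.2.1 ∧ G.Adj q.2.2.1 q.2.2.2 ∧
        G.Adj q.2.2.2 q.1 ∧ q.1 ≠ q.2.2.1 ∧ q.2.1 ≠ q.2.2.2)).card) =
      2 * ∑ i : V,
        ((∑ j ∈ G.neighborFinset i,
            Nat.choose (|(G.adjMatrix ℤ * G.lapMatrix ℤ) j j|
              - (G.adjMatrix ℤ * G.lapMatrix ℤ) i j).toNat 2) +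
         (∑ j ∈ Finset.univ.filter (fun j : V => j ∉ G.neighborFinset i ∧ j ≠ i),
            Nat.choose ((G.adjMatrix ℤ * G.lapMatrix ℤ) i j).natAbs 2)) := by
  classical
  set m : V → V → ℕ := fun i j => (G.neighborFinset i ∩ G.neighborFinset j).card with hm
  -- RHS term identification
  have hdiag : ∀ j : V, (G.adjMatrix ℤ * G.lapMatrix ℤ) j j = -(G.degree j : ℤ) := by
    intro j
    rw [nm_entry]
    simp [G.card_neighborFinset_eq_degree]
  have hterm1 : ∀ i j : V, G.Adj i j →
      (|(G.adjMatrix ℤ * G.lapMatrix ℤ) j j|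
        - (G.adjMatrix ℤ * G.lapMatrix ℤ) i j).toNat = m i j := by
    intro i j hij
    rw [hdiag, nm_entry, if_pos hij, abs_neg, Nat.abs_cast]
    simp [hm]
  have hterm2 : ∀ i j : V, ¬ G.Adj i j →
      ((G.adjMatrix ℤ * G.lapMatrix ℤ) i j).natAbs = m i j := by
    intro i j hij
    rw [nm_entry, if_neg hij]
    simp [hm]
  have hRHS : ∀ i : V,
      ((∑ j ∈ G.neighborFinset i,
            Nat.choose (|(G.adjMatrix ℤ * G.lapMatrix ℤ) j j|
              - (G.adjMatrix ℤ * G.lapMatrix ℤ) i j).toNat 2) +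
         (∑ j ∈ Finset.univ.filter (fun j : V => j ∉ G.neighborFinset i ∧ j ≠ i),
            Nat.choose ((G.adjMatrix ℤ * G.lapMatrix ℤ) i j).natAbs 2))
        = ∑ j ∈ Finset.univ.filter (fun j : V => j ≠ i), (m i j).choose 2 := by
    intro i
    have e1 : (∑ j ∈ G.neighborFinset i,
        Nat.choose (|(G.adjMatrix ℤ * G.lapMatrix ℤ) j j|
          - (G.adjMatrix ℤ * G.lapMatrix ℤ) i j).toNat 2)
        = ∑ j ∈ G.neighborFinset i, (m i j).choose 2 := by
      refine Finset.sum_congr rfl fun j hj => ?_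
      rw [hterm1 i j ((mem_neighborFinset G i j).mp hj)]
    have e2 : (∑ j ∈ Finset.univ.filter (fun j : V => j ∉ G.neighborFinset i ∧ j ≠ i),
        Nat.choose ((G.adjMatrix ℤ * G.lapMatrix ℤ) i j).natAbs 2)
        = ∑ j ∈ Finset.univ.filter (fun j : V => j ∉ G.neighborFinset i ∧ j ≠ i),
            (m i j).choose 2 := by
      refine Finset.sum_congr rfl fun j hj => ?_
      simp only [mem_filter, mem_neighborFinset] at hj
      rw [hterm2 i j hj.2.1]
    rw [e1, e2, ← Finset.sum_union]
    · apply Finset.sum_congr _ fun _ _ => rfl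
      ext j
      simp only [mem_union, mem_neighborFinset, mem_filter, mem_univ, true_and]
      constructor
      · rintro (h | h)
        · exact (G.ne_of_adj h).symm
        · exact h.2
      · intro h
        by_cases hadj : G.Adj i j
        · exact Or.inl hadj
        · exact Or.inr ⟨by simpa [mem_neighborFinset] using hadj, h⟩
    · rw [Finset.disjoint_left]
      intro j hj hj'
      simp only [mem_filter] at hj'
      exact hj'.2.1 hj
  simp only [hRHS]
  -- LHS
  rw [Finset.card_filter]
  simp only [Fintype.sum_prod_type]
  have key : ∀ a c : V,
      (∑ b : V, ∑ d : V, if (G.Adj a b ∧ G.Adj b c ∧ G.Adj c d ∧ G.Adj d a ∧ a ≠ c ∧ b ≠ d)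
        then 1 else 0) = if a ≠ c then m a c * m a c - m a c else 0 := by
    intro a c
    by_cases hac : a = c
    · simp [hac]
    · rw [if_pos hac]
      set s : Finset V := G.neighborFinset a ∩ G.neighborFinset c with hs
      have hiff : ∀ b d : V,
          (G.Adj a b ∧ G.Adj b c ∧ G.Adj c d ∧ G.Adj d a ∧ a ≠ c ∧ b ≠ d)
            ↔ (b ∈ s ∧ d ∈ s ∧ b ≠ d) := by
        intro b d
        simp only [hs, mem_inter, mem_neighborFinset]
        constructor
        · rintro ⟨h1, h2, h3, h4, _, h6⟩
          exact ⟨⟨h1, h2.symm⟩, ⟨h4.symm, h3⟩, h6⟩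
        · rintro ⟨⟨h1, h2⟩, ⟨h3, h4⟩, h5⟩
          exact ⟨h1, h2.symm, h4, h3.symm, hac, h5⟩
      simp only [hiff]
      have inner : ∀ b : V, (∑ d : V, if (b ∈ s ∧ d ∈ s ∧ b ≠ d) then 1 else 0)
          = if b ∈ s then s.card - 1 else 0 := by
        intro b
        by_cases hb : b ∈ s
        · rw [if_pos hb]
          simp only [hb, true_and]
          rw [← Finset.card_filter]
          have : Finset.univ.filter (fun d => d ∈ s ∧ b ≠ d) = s.erase b := by
            ext d
            simp [Finset.mem_erase, and_comm, ne_comm]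
          rw [this, Finset.card_erase_of_mem hb]
        · simp [hb]
      simp only [inner]
      rw [Finset.sum_ite_mem, Finset.univ_inter, Finset.sum_const, smul_eq_mul,
        Nat.mul_sub_one]
  have swap : ∀ a : V, (∑ b : V, ∑ c : V, ∑ d : V,
      if (G.Adj a b ∧ G.Adj b c ∧ G.Adj c d ∧ G.Adj d a ∧ a ≠ c ∧ b ≠ d) then 1 else 0)
      = ∑ c : V, ∑ b : V, ∑ d : V,
      if (G.Adj a b ∧ G.Adj b c ∧ G.Adj c d ∧ G.Adj d a ∧ a ≠ c ∧ b ≠ d) then 1 else 0 :=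
    fun a => Finset.sum_comm
  simp only [swap, key]
  rw [Finset.mul_sum]
  refine Finset.sum_congr rfl fun a _ => ?_
  rw [Finset.mul_sum, Finset.sum_filter]
  refine Finset.sum_congr rfl fun c _ => ?_
  by_cases hac : a = c
  · simp [hac]
  · rw [if_pos hac, if_pos (Ne.symm hac), two_mul_choose_two]
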